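/- The operations ⊕ and ⊗ on rooted phylogenetic networks satisfy the distributive law: for rooted phylogenetic networks M, M' with disjoint leaf sets and any rooted phylogenetic network N, (M ⊕ M') ⊗ N = (M ⊗ N) ⊕ (M' ⊗ N) (equality up to digraph isomorphism fixing each leaf). -/
import Mathlib


/-!
Formalisation framework for rooted phylogenetic networks.

A network is represented as a directed graph on an ambient vertex type `V`:
a vertex set `verts`, a root vertex `root`, and an arc relation `arc`.
-/

structure Net (V : Type*) where
  verts : Set V
  root : V
  arc : V → V → Prop

namespace Net

variable {V : Type*} {W : Type*}

/-- `N.reach u v` means there is a (possibly empty) directed path from `u` to `v`. -/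
def reach (N : Net V) : V → V → Prop := Relation.ReflTransGen N.arc

/-- The in-degree of a vertex. -/
noncomputable def inDeg (N : Net V) (v : V) : ℕ := {u | N.arc u v}.ncard

/-- The out-degree of a vertex. -/
noncomputable def outDeg (N : Net V) (v : V) : ℕ := {w | N.arc v w}.ncard

/-- The leaves of `N`: the vertices of out-degree 0. -/
def leaves (N : Net V) : Set V := {v ∈ N.verts | N.outDeg v = 0}

/-- `N.IsPathFrom u v l` : the list `l` is a directed path in `N` from `u` to `v`
(consecutive entries joined by arcs; a one-element list is the empty path). -/
def IsPathFrom (N : Net V) (u v : V) (l : List V) : Prop :=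
  l.Chain' N.arc ∧ l.head? = some u ∧ l.getLast? = some v

/-- A vertex is visible if some leaf is such that every directed path from the
root to that leaf passes through the vertex. -/
def Visible (N : Net V) (x : V) : Prop :=
  x ∈ N.verts ∧ ∃ y ∈ N.leaves, ∀ l : List V, N.IsPathFrom N.root y l → x ∈ l

/-- A subdividing vertex is one of in-degree 1 and out-degree 1. -/
def Subdividing (N : Net V) (v : V) : Prop := N.inDeg v = 1 ∧ N.outDeg v = 1

/-- The digraph `Cov(N)` on the visible vertices of `N`: an arc `(u,v)` whenever
`u ≠ v`, `u →_N v`, and no visible vertex lies strictly between `u` and `v`. -/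
def cov (N : Net V) : Net V where
  verts := {v | N.Visible v}
  root := N.root
  arc u v := N.Visible u ∧ N.Visible v ∧ u ≠ v ∧ N.reach u v ∧
    ¬ ∃ w, N.Visible w ∧ w ≠ u ∧ w ≠ v ∧ N.reach u w ∧ N.reach w v

/-- The normalisation `Ñ` of `N`: obtained from `Cov(N)` by suppressing every
subdividing vertex.  Its vertices are the visible vertices of `N` that are not
subdividing in `Cov(N)`, with an arc `(u,v)` whenever `Cov(N)` has a directed path
from `u` to `v` (of length at least one) all of whose interior vertices are
subdividing in `Cov(N)`. -/
def normalise (N : Net V) : Net V where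
  verts := {v | N.Visible v ∧ ¬ N.cov.Subdividing v}
  root := N.root
  arc u v := (N.Visible u ∧ ¬ N.cov.Subdividing u) ∧ (N.Visible v ∧ ¬ N.cov.Subdividing v) ∧
    ∃ l : List V, N.cov.IsPathFrom u v l ∧ 2 ≤ l.length ∧
      ∀ w ∈ l.tail.dropLast, N.cov.Subdividing w

/-- `N` is a rooted phylogenetic network on the finite nonempty leaf set `X`. -/
structure IsPhylo (N : Net V) (X : Set V) : Prop where
  finite : N.verts.Finite
  nonempty : X.Nonempty
  arc_mem : ∀ ⦃u v : V⦄, N.arc u v → u ∈ N.verts ∧ v ∈ N.verts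
  acyclic : ∀ ⦃u v : V⦄, N.arc u v → ¬ N.reach v u
  root_mem : N.root ∈ N.verts
  root_inDeg : N.inDeg N.root = 0
  root_unique : ∀ v ∈ N.verts, N.inDeg v = 0 → v = N.root
  leaves_eq : N.leaves = X
  leaf_inDeg : ∀ x ∈ X, N.inDeg x = 1
  interior_deg : ∀ v ∈ N.verts, v ≠ N.root → v ∉ X →
    (N.inDeg v = 1 ∧ 2 ≤ N.outDeg v) ∨ (N.outDeg v = 1 ∧ 2 ≤ N.inDeg v)

/-- `N` has no shortcuts: no arc `(u,v)` such that there is also a directed path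
from `u` to `v` of length at least 2 (i.e. a path-list with at least 3 entries). -/
def NoShortcuts (N : Net V) : Prop :=
  ∀ u v : V, N.arc u v → ¬ ∃ l : List V, N.IsPathFrom u v l ∧ 3 ≤ l.length

/-- Tree-child: every vertex is visible. -/
def TreeChild (N : Net V) : Prop := ∀ v ∈ N.verts, N.Visible v

/-- Normal: tree-child with no shortcuts. -/
def Normal (N : Net V) : Prop := N.TreeChild ∧ N.NoShortcuts

/-- A tree: every vertex has in-degree at most 1. -/
def IsTree (N : Net V) : Prop := ∀ v ∈ N.verts, N.inDeg v ≤ 1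

/-- The cluster of `v`: the set of leaves reachable from `v`. -/
def cluster (N : Net V) (v : V) : Set V := {x ∈ N.leaves | N.reach v x}

/-- The identifying set of `v`: the set of leaves `x` such that every directed
path from the root to `x` passes through `v`. -/
def ident (N : Net V) (v : V) : Set V :=
  {x ∈ N.leaves | ∀ l : List V, N.IsPathFrom N.root x l → v ∈ l}

/-- A digraph isomorphism between two networks, given by the map `f`. -/
def NetEquiv (M : Net V) (M' : Net W) (f : V → W) : Prop :=
  Set.BijOn f M.verts M'.verts ∧
    ∀ u ∈ M.verts, ∀ v ∈ M.verts, (M.arc u v ↔ M'.arc (f u) (f v))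

/-- Two networks over the same ambient type are equivalent relative to a leaf set
`X` if there is a digraph isomorphism between them fixing each element of `X`. -/
def EquivOn (M M' : Net V) (X : Set V) : Prop :=
  ∃ f : V → V, NetEquiv M M' f ∧ ∀ x ∈ X, f x = x

/-- `N₁ ⊕ N₂` : disjoint copies of `N₁` and `N₂` under a new root (`none`). -/
def oplus {V₁ V₂ : Type*} (N₁ : Net V₁) (N₂ : Net V₂) : Net (Option (V₁ ⊕ V₂)) where
  verts := insert none
    ((fun v => some (Sum.inl v)) '' N₁.verts ∪ (fun v => some (Sum.inr v)) '' N₂.verts)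
  root := none
  arc a b :=
    match a, b with
    | none, some (Sum.inl w) => w = N₁.root
    | none, some (Sum.inr w) => w = N₂.root
    | some (Sum.inl u), some (Sum.inl w) => N₁.arc u w
    | some (Sum.inr u), some (Sum.inr w) => N₂.arc u w
    | _, _ => False

/-- `N₁ ⊗ N₂` : identify each leaf `x` of `N₁` with the root of its own copy of `N₂`;
the copy of a non-leaf vertex `u` of `N₁` is `Sum.inl u`, and the vertex `w` of the
copy of `N₂` attached at leaf `x` of `N₁` is `Sum.inr (x, w)`. -/
def otimes {V₁ V₂ : Type*} (N₁ : Net V₁) (N₂ : Net V₂) : Net (V₁ ⊕ V₁ × V₂) where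
  verts := Sum.inl '' (N₁.verts \ N₁.leaves) ∪ Sum.inr '' (N₁.leaves ×ˢ N₂.verts)
  root := Sum.inl N₁.root
  arc a b :=
    match a, b with
    | Sum.inl u, Sum.inl w => N₁.arc u w ∧ w ∉ N₁.leaves
    | Sum.inl u, Sum.inr (x, w) => x ∈ N₁.leaves ∧ N₁.arc u x ∧ w = N₂.root
    | Sum.inr (x, w), Sum.inr (x', w') => x = x' ∧ x ∈ N₁.leaves ∧ N₂.arc w w'
    | _, _ => False

end Net

/-- A hierarchy: a collection of sets any two of which are disjoint or nested. -/
def IsHierarchy {V : Type*} (C : Set (Set V)) : Prop :=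
  ∀ A ∈ C, ∀ B ∈ C, A ∩ B = ∅ ∨ A ⊆ B ∨ B ⊆ A


namespace Net

variable {V₁ V₂ V₃ : Type*}

lemma oplus_outDeg_inl (M : Net V₁) (M' : Net V₂) (v : V₁) :
    (M.oplus M').outDeg (some (Sum.inl v)) = M.outDeg v := by
  have h : {b | (M.oplus M').arc (some (Sum.inl v)) b}
      = (fun w => (some (Sum.inl w) : Option (V₁ ⊕ V₂))) '' {w | M.arc v w} := by
    ext b
    rcases b with _ | (w | w) <;> simp [oplus]
  rw [outDeg, h, Set.ncard_image_of_injective _ (by intro a b hab; simpa using hab)]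
  rfl

lemma oplus_outDeg_inr (M : Net V₁) (M' : Net V₂) (v : V₂) :
    (M.oplus M').outDeg (some (Sum.inr v)) = M'.outDeg v := by
  have h : {b | (M.oplus M').arc (some (Sum.inr v)) b}
      = (fun w => (some (Sum.inr w) : Option (V₁ ⊕ V₂))) '' {w | M'.arc v w} := by
    ext b
    rcases b with _ | (w | w) <;> simp [oplus]
  rw [outDeg, h, Set.ncard_image_of_injective _ (by intro a b hab; simpa using hab)]
  rfl

lemma oplus_outDeg_none (M : Net V₁) (M' : Net V₂) :
    (M.oplus M').outDeg none = 2 := by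
  have h : {b | (M.oplus M').arc none b}
      = {(some (Sum.inl M.root) : Option (V₁ ⊕ V₂)), some (Sum.inr M'.root)} := by
    ext b
    rcases b with _ | (w | w) <;> simp [oplus]
  rw [outDeg, h, Set.ncard_pair (by simp)]

lemma oplus_leaves (M : Net V₁) (M' : Net V₂) :
    (M.oplus M').leaves = (fun x => (some (Sum.inl x) : Option (V₁ ⊕ V₂))) '' M.leaves
      ∪ (fun x => (some (Sum.inr x) : Option (V₁ ⊕ V₂))) '' M'.leaves := by
  ext b
  rcases b with _ | (v | v)
  · simp [leaves, oplus_outDeg_none]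
  · simp only [leaves, Set.mem_setOf_eq, oplus_outDeg_inl, Set.mem_sep_iff]
    simp [oplus]
  · simp only [leaves, Set.mem_setOf_eq, oplus_outDeg_inr, Set.mem_sep_iff]
    simp [oplus]

lemma oplus_arc_iff {Va Vb : Type*} (N₁ : Net Va) (N₂ : Net Vb) (a b : Option (Va ⊕ Vb)) :
    (N₁.oplus N₂).arc a b ↔ (match a, b with
      | none, some (Sum.inl w) => w = N₁.root
      | none, some (Sum.inr w) => w = N₂.root
      | some (Sum.inl u), some (Sum.inl w) => N₁.arc u w
      | some (Sum.inr u), some (Sum.inr w) => N₂.arc u w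
      | _, _ => False) := Iff.rfl

lemma otimes_arc_iff {Va Vb : Type*} (N₁ : Net Va) (N₂ : Net Vb) (a b : Va ⊕ Va × Vb) :
    (N₁.otimes N₂).arc a b ↔ (match a, b with
      | Sum.inl u, Sum.inl w => N₁.arc u w ∧ w ∉ N₁.leaves
      | Sum.inl u, Sum.inr (x, w) => x ∈ N₁.leaves ∧ N₁.arc u x ∧ w = N₂.root
      | Sum.inr (x, w), Sum.inr (x', w') => x = x' ∧ x ∈ N₁.leaves ∧ N₂.arc w w'
      | _, _ => False) := Iff.rfl

lemma otimes_root {Va Vb : Type*} (N₁ : Net Va) (N₂ : Net Vb) :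
    (N₁.otimes N₂).root = Sum.inl N₁.root := rfl

lemma root_not_leaf {V : Type*} {M : Net V} {X : Set V} (hM : M.IsPhylo X) :
    M.root ∉ M.leaves := by
  intro h
  have h1 := hM.leaf_inDeg M.root (hM.leaves_eq ▸ h)
  rw [hM.root_inDeg] at h1
  exact absurd h1 (by norm_num)

end Net


/-- The distributivity isomorphism. -/
def distribF {V₁ V₂ V₃ : Type*} :
    (Option (V₁ ⊕ V₂)) ⊕ (Option (V₁ ⊕ V₂) × V₃) →
      Option ((V₁ ⊕ V₁ × V₃) ⊕ (V₂ ⊕ V₂ × V₃))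
  | .inl none => none
  | .inl (some (.inl u)) => some (.inl (.inl u))
  | .inl (some (.inr u)) => some (.inr (.inl u))
  | .inr (none, _) => none
  | .inr (some (.inl x), y) => some (.inl (.inr (x, y)))
  | .inr (some (.inr x), y) => some (.inr (.inr (x, y)))

section DistribAux

variable {V₁ V₂ V₃ : Type*} (M : Net V₁) (M' : Net V₂) (N : Net V₃)

lemma distrib_mem_left (a : (Option (V₁ ⊕ V₂)) ⊕ (Option (V₁ ⊕ V₂) × V₃)) :
    a ∈ ((M.oplus M').otimes N).verts ↔
      (match a with
        | Sum.inl none => True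
        | Sum.inl (some (Sum.inl u)) => u ∈ M.verts ∧ u ∉ M.leaves
        | Sum.inl (some (Sum.inr u)) => u ∈ M'.verts ∧ u ∉ M'.leaves
        | Sum.inr (none, _) => False
        | Sum.inr (some (Sum.inl x), y) => x ∈ M.leaves ∧ y ∈ N.verts
        | Sum.inr (some (Sum.inr x), y) => x ∈ M'.leaves ∧ y ∈ N.verts) := by
  rcases a with (_ | (u | u)) | ⟨(_ | (x | x)), y⟩ <;>
    · simp only [Net.otimes, Set.mem_union, Set.mem_image, Set.mem_diff, Set.mem_prod,
        Net.oplus_leaves]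
      simp [Net.oplus]
      try aesop

lemma distrib_mem_right (b : Option ((V₁ ⊕ V₁ × V₃) ⊕ (V₂ ⊕ V₂ × V₃))) :
    b ∈ ((M.otimes N).oplus (M'.otimes N)).verts ↔
      (match b with
        | none => True
        | some (Sum.inl (Sum.inl u)) => u ∈ M.verts ∧ u ∉ M.leaves
        | some (Sum.inl (Sum.inr (x, y))) => x ∈ M.leaves ∧ y ∈ N.verts
        | some (Sum.inr (Sum.inl u)) => u ∈ M'.verts ∧ u ∉ M'.leaves
        | some (Sum.inr (Sum.inr (x, y))) => x ∈ M'.leaves ∧ y ∈ N.verts) := by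
  rcases b with _ | ((u | ⟨x, y⟩) | (u | ⟨x, y⟩)) <;>
    simp [Net.oplus, Net.otimes]

end DistribAux

/-- Distributivity: `(M ⊕ M') ⊗ N = (M ⊗ N) ⊕ (M' ⊗ N)`, up to a
digraph isomorphism mapping each leaf of the left-hand network to the corresponding
leaf of the right-hand network. -/
theorem stmt17 {V₁ V₂ V₃ : Type*} (M : Net V₁) (M' : Net V₂) (N : Net V₃)
    (X₁ : Set V₁) (X₂ : Set V₂) (X₃ : Set V₃)
    (hM : M.IsPhylo X₁) (hM' : M'.IsPhylo X₂) (hN : N.IsPhylo X₃) :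
    ∃ f, Net.NetEquiv ((M.oplus M').otimes N) ((M.otimes N).oplus (M'.otimes N)) f ∧
      (∀ x ∈ X₁, ∀ y ∈ X₃,
        f (Sum.inr (some (Sum.inl x), y)) = some (Sum.inl (Sum.inr (x, y)))) ∧
      (∀ x ∈ X₂, ∀ y ∈ X₃,
        f (Sum.inr (some (Sum.inr x), y)) = some (Sum.inr (Sum.inr (x, y)))) := by
  classical
  refine ⟨distribF, ⟨⟨?_, ?_, ?_⟩, ?_⟩, ?_, ?_⟩
  · -- MapsTo
    intro a ha
    rw [distrib_mem_left] at ha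
    rw [distrib_mem_right]
    rcases a with (_ | (u | u)) | ⟨(_ | (x | x)), y⟩ <;> simp_all [distribF]
  · -- InjOn
    intro a ha b hb hab
    rw [distrib_mem_left] at ha hb
    rcases a with (_ | (u | u)) | ⟨(_ | (x | x)), y⟩ <;>
      rcases b with (_ | (u' | u')) | ⟨(_ | (x' | x')), y'⟩ <;>
      simp_all [distribF]
  · -- SurjOn
    intro b hb
    rw [distrib_mem_right] at hb
    rcases b with _ | ((u | ⟨x, y⟩) | (u | ⟨x, y⟩))
    · exact ⟨Sum.inl none, by rw [distrib_mem_left]; trivial, rfl⟩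
    · exact ⟨Sum.inl (some (Sum.inl u)), by rw [distrib_mem_left]; exact hb, rfl⟩
    · exact ⟨Sum.inr (some (Sum.inl x), y), by rw [distrib_mem_left]; exact hb, rfl⟩
    · exact ⟨Sum.inl (some (Sum.inr u)), by rw [distrib_mem_left]; exact hb, rfl⟩
    · exact ⟨Sum.inr (some (Sum.inr x), y), by rw [distrib_mem_left]; exact hb, rfl⟩
  · -- arcs
    intro a ha b hb
    rw [distrib_mem_left] at ha hb
    have hr1 := Net.root_not_leaf hM
    have hr2 := Net.root_not_leaf hM'
    rcases a with (_ | (u | u)) | ⟨(_ | (x | x)), y⟩ <;>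
      rcases b with (_ | (u' | u')) | ⟨(_ | (x' | x')), y'⟩ <;>
      simp only at ha hb <;>
      first
        | exact ha.elim
        | exact hb.elim
        | (simp only [distribF]
           simp [Net.otimes_arc_iff, Net.oplus_arc_iff, Net.otimes_root, Net.oplus_leaves]
           try tauto
           try aesop)
  · intro x _ y _; rfl
  · intro x _ y _; rfl
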